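/- Let M be the 6×6 complex matrix with rows (0, 1, 1, 0, 0, 0), (0, 0, 1, 1, 1, 0), (1, 1, 0, 0, 0, 1), (0, 0, 0, 0, 1/2 + i/2, 1), (1, 0, 0, 1, 1/2 − i/2, 0), (1 + i, 1, 0, i, 0, 0), and let S be the 6×6 real matrix given by S_{ij} = |M_{ij}|² for all i, j. Then rank M = 4 (over ℂ) and rank S = 4 (over ℝ). -/

import Mathlib

open Matrix

/-- Evaluation of a vector literal at index `5`. -/
lemma stmt15_cons_val_five {α : Type*} {m : ℕ} (x : α) (u : Fin (m + 5) → α) :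
    vecCons x u 5 = vecHead (vecTail (vecTail (vecTail (vecTail u)))) := rfl

/-- A `6 × 6` matrix over a field has rank `4` as soon as it factors through `Fin 4`
and some `4 × 4` "compression" of it is invertible. -/
lemma stmt15_rank_eq_four_of_factor {K : Type*} [Field K] (X : Matrix (Fin 6) (Fin 6) K)
    (A : Matrix (Fin 6) (Fin 4) K) (B : Matrix (Fin 4) (Fin 6) K) (hfact : X = A * B)
    (P : Matrix (Fin 4) (Fin 6) K) (Q : Matrix (Fin 6) (Fin 4) K)
    (hdet : IsUnit (P * X * Q).det) : X.rank = 4 := by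
  refine le_antisymm ?_ ?_
  · calc X.rank = (A * B).rank := by rw [hfact]
    _ ≤ A.rank := rank_mul_le_left A B
    _ ≤ Fintype.card (Fin 4) := rank_le_card_width A
    _ = 4 := by simp
  · calc (4 : ℕ) = Fintype.card (Fin 4) := by simp
    _ = (P * X * Q).rank :=
      (rank_of_isUnit _ ((Matrix.isUnit_iff_isUnit_det _).mpr hdet)).symm
    _ ≤ (P * X).rank := rank_mul_le_left _ _
    _ ≤ X.rank := rank_mul_le_right _ _

set_option maxHeartbeats 1600000 in
/-- Complex psd-minimality witness for the fourth six-vertex doubly 3/4 polytope of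
Figure 6: the explicit complex matrix `M` and its entrywise squared-modulus matrix `S`
both have rank 4. -/
theorem stmt_15 (M : Matrix (Fin 6) (Fin 6) ℂ)
    (hM : M = !![0, 1, 1, 0, 0, 0;
                 0, 0, 1, 1, 1, 0;
                 1, 1, 0, 0, 0, 1;
                 0, 0, 0, 0, 1/2 + Complex.I/2, 1;
                 1, 0, 0, 1, 1/2 - Complex.I/2, 0;
                 1 + Complex.I, 1, 0, Complex.I, 0, 0])
    (S : Matrix (Fin 6) (Fin 6) ℝ)
    (hS : ∀ i j : Fin 6, S i j = Complex.normSq (M i j)) :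
    M.rank = 4 ∧ S.rank = 4 := by
  have hSval : S = !![0, 1, 1, 0, 0, 0;
                      0, 0, 1, 1, 1, 0;
                      1, 1, 0, 0, 0, 1;
                      0, 0, 0, 0, 1/2, 1;
                      1, 0, 0, 1, 1/2, 0;
                      2, 1, 0, 1, 0, 0] := by
    ext i j
    rw [hS, hM]
    fin_cases i <;> fin_cases j <;>
      norm_num [Complex.normSq_apply, stmt15_cons_val_five, Matrix.vecHead, Matrix.vecTail]
  constructor
  · refine stmt15_rank_eq_four_of_factor M
      !![1, 0, 0, 0;
         0, 1, 0, 0;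
         0, 0, 1, 0;
         0, 0, 0, 1;
         -1, 1, 1, -1;
         -Complex.I, Complex.I, 1 + Complex.I, -1 - Complex.I]
      !![0, 1, 1, 0, 0, 0;
         0, 0, 1, 1, 1, 0;
         1, 1, 0, 0, 0, 1;
         0, 0, 0, 0, 1/2 + Complex.I/2, 1] ?_
      !![1, 0, 0, 0, 0, 0;
         0, 1, 0, 0, 0, 0;
         0, 0, 1, 0, 0, 0;
         0, 0, 0, 1, 0, 0]
      !![1, 0, 0, 0;
         0, 1, 0, 0;
         0, 0, 1, 0;
         0, 0, 0, 0;
         0, 0, 0, 1;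
         0, 0, 0, 0] ?_
    · rw [hM]
      ext i j
      fin_cases i <;> fin_cases j <;>
        simp [Matrix.mul_apply, Fin.sum_univ_succ, stmt15_cons_val_five, Matrix.vecHead,
          Matrix.vecTail] <;> ring_nf <;> simp [Complex.ext_iff]
    · have hPQ : ((!![1, 0, 0, 0, 0, 0;
         0, 1, 0, 0, 0, 0;
         0, 0, 1, 0, 0, 0;
         0, 0, 0, 1, 0, 0] : Matrix (Fin 4) (Fin 6) ℂ) * M * (!![1, 0, 0, 0;
         0, 1, 0, 0;
         0, 0, 1, 0;
         0, 0, 0, 0;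
         0, 0, 0, 1;
         0, 0, 0, 0] : Matrix (Fin 6) (Fin 4) ℂ)) = !![(0:ℂ), 1, 1, 0;
         0, 0, 1, 1;
         1, 1, 0, 0;
         0, 0, 0, 1/2 + Complex.I/2] := by
        rw [hM]
        ext i j
        fin_cases i <;> fin_cases j <;>
          simp [Matrix.mul_apply, Fin.sum_univ_six, stmt15_cons_val_five, Matrix.vecHead,
            Matrix.vecTail]
      rw [hPQ, isUnit_iff_ne_zero]
      norm_num [Matrix.det_succ_row_zero, Fin.sum_univ_succ, Matrix.det_fin_three,
        Complex.ext_iff, show ((1 : Fin 4).succAbove 2) = 3 from rfl, Matrix.cons_val_two,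
        Matrix.vecHead, Matrix.vecTail, show (Fin.succAbove (2 : Fin 4) 2) = 3 from rfl,
        show ∀ (x : ℂ) (u : Fin 3 → ℂ), vecCons x u 3 = vecHead (vecTail (vecTail u)) from
          fun _ _ => rfl]
  · refine stmt15_rank_eq_four_of_factor S
      !![1, 0, 0, 0;
         0, 1, 0, 0;
         0, 0, 1, 0;
         0, 0, 0, 1;
         -1, 1, 1, -1;
         -1, 1, 2, -2]
      !![0, 1, 1, 0, 0, 0;
         0, 0, 1, 1, 1, 0;
         1, 1, 0, 0, 0, 1;
         0, 0, 0, 0, 1/2, 1] ?_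
      !![1, 0, 0, 0, 0, 0;
         0, 1, 0, 0, 0, 0;
         0, 0, 1, 0, 0, 0;
         0, 0, 0, 1, 0, 0]
      !![1, 0, 0, 0;
         0, 1, 0, 0;
         0, 0, 1, 0;
         0, 0, 0, 0;
         0, 0, 0, 1;
         0, 0, 0, 0] ?_
    · rw [hSval]
      ext i j
      fin_cases i <;> fin_cases j <;>
        norm_num [Matrix.mul_apply, Fin.sum_univ_succ, stmt15_cons_val_five, Matrix.vecHead,
          Matrix.vecTail]
    · have hPQ : ((!![1, 0, 0, 0, 0, 0;
         0, 1, 0, 0, 0, 0;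
         0, 0, 1, 0, 0, 0;
         0, 0, 0, 1, 0, 0] : Matrix (Fin 4) (Fin 6) ℝ) * S * (!![1, 0, 0, 0;
         0, 1, 0, 0;
         0, 0, 1, 0;
         0, 0, 0, 0;
         0, 0, 0, 1;
         0, 0, 0, 0] : Matrix (Fin 6) (Fin 4) ℝ)) = !![(0:ℝ), 1, 1, 0;
         0, 0, 1, 1;
         1, 1, 0, 0;
         0, 0, 0, 1/2] := by
        rw [hSval]
        ext i j
        fin_cases i <;> fin_cases j <;>
          simp [Matrix.mul_apply, Fin.sum_univ_six, stmt15_cons_val_five, Matrix.vecHead,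
            Matrix.vecTail]
      rw [hPQ, isUnit_iff_ne_zero]
      norm_num [Matrix.det_succ_row_zero, Fin.sum_univ_succ, Matrix.det_fin_three,
        show ((1 : Fin 4).succAbove 2) = 3 from rfl, Matrix.cons_val_two,
        Matrix.vecHead, Matrix.vecTail, show (Fin.succAbove (2 : Fin 4) 2) = 3 from rfl,
        show ∀ (x : ℝ) (u : Fin 3 → ℝ), vecCons x u 3 = vecHead (vecTail (vecTail u)) from
          fun _ _ => rfl]
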